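/- Let N ≥ 2, r, s, c ∈ (0,1), α_s, α_r, α_c > 0, and set α = min{r, s}. Let Ω_s ⊂ ℝ^N be a bounded nonempty open set satisfying the measure density condition for ρ ∈ (0,1] (there exists C_{Ω_s} > 0 with |Ω_s ∩ B_ρ(x)| ≥ C_{Ω_s} ρ^N for all x ∈ Ω_s, ρ ∈ (0,1]), and let Ω_r = ℝ^N ∖ closure(Ω_s) satisfy the measure density condition for all ρ > 0. Then there exists C = C(Ω_r, Ω_s, r, s, c, N, α_s, α_r, α_c) > 0 such that for every v ∈ L¹(ℝ^N) ∩ L²(ℝ^N) with Q(v) < ∞, one has ‖v‖_{L²(ℝ^N)}^{2 + 4α/N} ≤ C ‖v‖_{L¹(ℝ^N)}^{4α/N} ( ‖v‖_{L²(ℝ^N)}² + Q(v) ). -/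

import Mathlib

set_option maxHeartbeats 1000000

open MeasureTheory ENNReal Metric Filter Topology

/-- The squared Gagliardo seminorm `[v]_{s,Ω}²` on an open set `Ω ⊆ ℝ^N`. -/
noncomputable def gagliardoSq {N : ℕ} (s : ℝ) (Ω : Set (EuclideanSpace ℝ (Fin N)))
    (v : EuclideanSpace ℝ (Fin N) → ℝ) : ℝ≥0∞ :=
  ∫⁻ x in Ω, ∫⁻ y in Ω, ENNReal.ofReal ((v x - v y) ^ 2 / ‖x - y‖ ^ ((N : ℝ) + 2 * s))

/-- The cross (coupling) term between the two domains. -/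
noncomputable def crossTerm {N : ℕ} (c : ℝ) (Ωs Ωr : Set (EuclideanSpace ℝ (Fin N)))
    (v : EuclideanSpace ℝ (Fin N) → ℝ) : ℝ≥0∞ :=
  ∫⁻ x in Ωs, ∫⁻ y in Ωr, ENNReal.ofReal ((v x - v y) ^ 2 / ‖x - y‖ ^ ((N : ℝ) + 2 * c))

/-- The energy form `Q` of the coupled nonlocal problem. -/
noncomputable def energyQ {N : ℕ} (r s c αs αr αc : ℝ)
    (Ωs Ωr : Set (EuclideanSpace ℝ (Fin N))) (v : EuclideanSpace ℝ (Fin N) → ℝ) : ℝ≥0∞ :=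
  ENNReal.ofReal (αs / 4) * gagliardoSq s Ωs v + ENNReal.ofReal (αr / 4) * gagliardoSq r Ωr v +
    ENNReal.ofReal (αc / 2) * crossTerm c Ωs Ωr v

lemma gagliardoSq_congr_ae {N : ℕ} (s : ℝ) (Ω : Set (EuclideanSpace ℝ (Fin N)))
    {v w : EuclideanSpace ℝ (Fin N) → ℝ} (h : v =ᵐ[volume] w) :
    gagliardoSq s Ω v = gagliardoSq s Ω w := by
  unfold gagliardoSq
  apply lintegral_congr_ae
  filter_upwards [ae_restrict_of_ae h] with x hx
  apply lintegral_congr_ae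
  filter_upwards [ae_restrict_of_ae h] with y hy
  rw [hx, hy]

lemma crossTerm_congr_ae {N : ℕ} (c : ℝ) (Ωs Ωr : Set (EuclideanSpace ℝ (Fin N)))
    {v w : EuclideanSpace ℝ (Fin N) → ℝ} (h : v =ᵐ[volume] w) :
    crossTerm c Ωs Ωr v = crossTerm c Ωs Ωr w := by
  unfold crossTerm
  apply lintegral_congr_ae
  filter_upwards [ae_restrict_of_ae h] with x hx
  apply lintegral_congr_ae
  filter_upwards [ae_restrict_of_ae h] with y hy
  rw [hx, hy]


open MeasureTheory ENNReal

/-- The elementary real optimization step of Nash's argument. -/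
lemma nash_opt_real (N : ℕ) (hN : 0 < N) (α A B m l q : ℝ) (hα : 0 < α) (hA : 0 < A)
    (hB : 0 < B) (hm : 0 < m) (hl : 0 < l) (hq : 0 ≤ q)
    (h : ∀ ρ : ℝ, 0 < ρ → ρ ≤ 1 → m ≤ A * ρ ^ (2 * α) * q + B * (l ^ 2 / ρ ^ N)) :
    m ^ (1 + 2 * α / (N : ℝ)) ≤
      (2 * B) ^ (2 * α / (N : ℝ)) * max 1 (2 * A) * l ^ (4 * α / (N : ℝ)) * (m + q) := by
  have hNR : (0 : ℝ) < N := by exact_mod_cast hN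
  set θ := 2 * α / (N : ℝ) with hθ
  have hθ0 : 0 < θ := by positivity
  have hl4 : l ^ (4 * α / (N : ℝ)) = (l ^ 2) ^ θ := by
    have h1 : (4 : ℝ) * α / (N : ℝ) = 2 * θ := by rw [hθ]; ring
    rw [h1, Real.rpow_mul (by positivity)]
    norm_num
  have hm_pow : m ^ (1 + θ) = m ^ θ * m := by
    rw [Real.rpow_add hm, Real.rpow_one]; ring
  have hP : (0 : ℝ) ≤ (2 * B) ^ θ := Real.rpow_nonneg (by positivity) _
  have hR : (0 : ℝ) ≤ (l ^ 2) ^ θ := Real.rpow_nonneg (by positivity) _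
  rw [hl4, hm_pow]
  by_cases hcase : m ≤ 2 * B * l ^ 2
  · have h1 : m ^ θ ≤ (2 * B * l ^ 2) ^ θ := Real.rpow_le_rpow hm.le hcase hθ0.le
    have h2 : (2 * B * l ^ 2) ^ θ = (2 * B) ^ θ * (l ^ 2) ^ θ :=
      Real.mul_rpow (by positivity) (by positivity)
    have hmq : m ≤ max 1 (2 * A) * (m + q) := by
      nlinarith [le_max_left (1 : ℝ) (2 * A), hm.le]
    calc m ^ θ * m ≤ (2 * B) ^ θ * (l ^ 2) ^ θ * m := by
          rw [← h2]; exact mul_le_mul_of_nonneg_right h1 hm.le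
      _ ≤ (2 * B) ^ θ * max 1 (2 * A) * (l ^ 2) ^ θ * (m + q) := by
          nlinarith [mul_le_mul_of_nonneg_left hmq (mul_nonneg hP hR)]
  · push_neg at hcase
    set x := 2 * B * l ^ 2 / m with hx
    have hx0 : 0 < x := by positivity
    have hx1 : x < 1 := (div_lt_one hm).2 hcase
    set ρ := x ^ ((N : ℝ)⁻¹) with hρ
    have hρ0 : 0 < ρ := Real.rpow_pos_of_pos hx0 _
    have hρ1 : ρ ≤ 1 := Real.rpow_le_one hx0.le hx1.le (by positivity)
    have hρN : ρ ^ N = x := by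
      rw [hρ, ← Real.rpow_natCast (x ^ ((N : ℝ)⁻¹)) N, ← Real.rpow_mul hx0.le,
        inv_mul_cancel₀ hNR.ne', Real.rpow_one]
    have hρα : ρ ^ (2 * α) = x ^ θ := by
      rw [hρ, ← Real.rpow_mul hx0.le, hθ]
      congr 1
      field_simp
    have hkey := h ρ hρ0 hρ1
    rw [hρN, hρα] at hkey
    have hBl : B * (l ^ 2 / x) = m / 2 := by
      rw [hx]; field_simp
    rw [hBl] at hkey
    have h2 : m / 2 ≤ A * x ^ θ * q := by linarith
    have hxθ : 0 < x ^ θ := Real.rpow_pos_of_pos hx0 _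
    have hmθ : 0 < m ^ θ := Real.rpow_pos_of_pos hm _
    have hmx : m ^ θ * x ^ θ = (2 * B) ^ θ * (l ^ 2) ^ θ := by
      rw [← Real.mul_rpow hm.le hx0.le, ← Real.mul_rpow (by positivity) (by positivity)]
      congr 1
      rw [hx]; field_simp
    have hAq : (2 * A) * q ≤ max 1 (2 * A) * (m + q) := by
      have h3 : (2 * A) * q ≤ max 1 (2 * A) * q :=
        mul_le_mul_of_nonneg_right (le_max_right _ _) hq
      have h4 : max 1 (2 * A) * q ≤ max 1 (2 * A) * (m + q) := by
        apply mul_le_mul_of_nonneg_left (by linarith)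
        exact le_trans zero_le_one (le_max_left _ _)
      linarith
    calc m ^ θ * m ≤ m ^ θ * (2 * (A * x ^ θ * q)) := by
          apply mul_le_mul_of_nonneg_left (by linarith) hmθ.le
      _ = (m ^ θ * x ^ θ) * ((2 * A) * q) := by ring
      _ = (2 * B) ^ θ * (l ^ 2) ^ θ * ((2 * A) * q) := by rw [hmx]
      _ ≤ (2 * B) ^ θ * (l ^ 2) ^ θ * (max 1 (2 * A) * (m + q)) := by
          exact mul_le_mul_of_nonneg_left hAq (mul_nonneg hP hR)
      _ = (2 * B) ^ θ * max 1 (2 * A) * (l ^ 2) ^ θ * (m + q) := by ring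


open MeasureTheory ENNReal Filter Topology Metric

lemma boundary_null {N : ℕ} (hN : 0 < N) (Ωs : Set (EuclideanSpace ℝ (Fin N)))
    (hΩs : IsOpen Ωs) (CΩs : ℝ) (hCΩs : 0 < CΩs)
    (hdens : ∀ x ∈ Ωs, ∀ ρ : ℝ, 0 < ρ → ρ ≤ 1 →
      ENNReal.ofReal (CΩs * ρ ^ N) ≤ volume (Ωs ∩ Metric.ball x ρ)) :
    volume (closure Ωs \ Ωs) = 0 := by
  haveI : Nonempty (Fin N) := ⟨⟨0, hN⟩⟩
  set μ : Measure (EuclideanSpace ℝ (Fin N)) := volume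
  set k : ℝ := (μ (ball (0 : EuclideanSpace ℝ (Fin N)) 1)).toReal with hk
  have hk0 : 0 < k := by
    apply ENNReal.toReal_pos
    · exact (measure_ball_pos μ _ one_pos).ne'
    · exact measure_ball_lt_top.ne
  have hkfin : μ (ball (0 : EuclideanSpace ℝ (Fin N)) 1) = ENNReal.ofReal k :=
    (ENNReal.ofReal_toReal measure_ball_lt_top.ne).symm
  set ε : ℝ≥0∞ := ENNReal.ofReal (CΩs / 2 ^ N / k / 2) with hε
  have hε0 : 0 < ε := by
    rw [hε]; apply ENNReal.ofReal_pos.2; positivity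
  have hbes := Besicovitch.ae_tendsto_measure_inter_div_of_measurableSet μ hΩs.measurableSet
  refine measure_mono_null (t := {x : EuclideanSpace ℝ (Fin N) |
    ¬ Tendsto (fun r => μ (Ωs ∩ closedBall x r) / μ (closedBall x r)) (𝓝[>] 0)
      (𝓝 (Ωs.indicator 1 x))}) ?_ ?_
  · -- closure Ωs \ Ωs is contained in the set where Besicovitch's conclusion fails
    intro x hx
    simp only [Set.mem_setOf_eq]
    intro htend
    rw [Set.indicator_of_notMem hx.2] at htend
    -- the ratio is eventually < ε
    have hev : ∀ᶠ r in 𝓝[>] (0 : ℝ),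
        μ (Ωs ∩ closedBall x r) / μ (closedBall x r) < ε := htend (gt_mem_nhds hε0)
    have hev2 : ∀ᶠ r in 𝓝[>] (0 : ℝ), r ∈ Set.Ioo (0 : ℝ) 1 :=
      Ioo_mem_nhdsGT_of_mem (by norm_num : (0:ℝ) ∈ Set.Ico (0:ℝ) 1)
    obtain ⟨r, hr1, hr0, hr1'⟩ := (hev.and hev2).exists
    -- lower bound for the numerator
    obtain ⟨x', hx'Ω, hx'd⟩ : ∃ x' ∈ Ωs, dist x' x < r / 2 := by
      have := Metric.mem_closure_iff.1 hx.1 (r / 2) (by linarith)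
      obtain ⟨x', h1, h2⟩ := this
      exact ⟨x', h1, by rwa [dist_comm]⟩
    have hsub : Ωs ∩ ball x' (r / 2) ⊆ Ωs ∩ closedBall x r := by
      rintro z ⟨hz1, hz2⟩
      refine ⟨hz1, ?_⟩
      rw [mem_closedBall]
      rw [mem_ball] at hz2
      have := dist_triangle z x' x
      linarith
    have hlow : ENNReal.ofReal (CΩs * (r / 2) ^ N) ≤ μ (Ωs ∩ closedBall x r) :=
      le_trans (hdens x' hx'Ω (r / 2) (by linarith) (by linarith)) (measure_mono hsub)
    -- upper bound via the ratio
    have hcb : μ (closedBall x r) = ENNReal.ofReal (r ^ N) *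
        μ (ball (0 : EuclideanSpace ℝ (Fin N)) 1) := by
      have := Measure.addHaar_closedBall (μ := μ) x (le_of_lt hr0)
      rwa [finrank_euclideanSpace_fin] at this
    have hcbne : μ (closedBall x r) ≠ 0 := (measure_closedBall_pos μ _ hr0).ne'
    have hcbtop : μ (closedBall x r) ≠ ⊤ := measure_closedBall_lt_top.ne
    have hup : μ (Ωs ∩ closedBall x r) < ε * μ (closedBall x r) :=
      (ENNReal.div_lt_iff (Or.inl hcbne) (Or.inl hcbtop)).1 hr1
    have hre : ε * μ (closedBall x r) = ENNReal.ofReal (CΩs * (r / 2) ^ N / 2) := by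
      rw [hcb, hkfin, hε, ← ENNReal.ofReal_mul (by positivity),
        ← ENNReal.ofReal_mul (by positivity)]
      congr 1
      field_simp
      rw [← mul_pow]; congr 1; ring
    rw [hre] at hup
    have : (CΩs * (r / 2) ^ N : ℝ) ≤ CΩs * (r / 2) ^ N / 2 := by
      have h1 := lt_of_le_of_lt hlow hup
      have h2 := ENNReal.ofReal_lt_ofReal_iff_of_nonneg (by positivity) |>.1 h1
      linarith
    nlinarith [pow_pos (by linarith : (0:ℝ) < r / 2) N]
  · -- that set is null
    have := hbes
    rw [ae_iff] at this
    exact this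

lemma domain_est {N : ℕ} (hN : 0 < N) (Ω : Set (EuclideanSpace ℝ (Fin N)))
    (hΩ : MeasurableSet Ω) (C σ ρ : ℝ) (hC : 0 < C) (hσ : 0 < σ) (hρ : 0 < ρ)
    (hdens : ∀ x ∈ Ω, ENNReal.ofReal (C * ρ ^ N) ≤ volume (Ω ∩ Metric.ball x ρ))
    (v : EuclideanSpace ℝ (Fin N) → ℝ) (hv : Measurable v)
    (hM : (∫⁻ x in Ω, ENNReal.ofReal (v x ^ 2)) ≠ ⊤) :
    ENNReal.ofReal (C * ρ ^ N) * ∫⁻ x in Ω, ENNReal.ofReal (v x ^ 2) ≤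
      ENNReal.ofReal ((volume (Metric.ball (0 : EuclideanSpace ℝ (Fin N)) 1)).toReal *
          ρ ^ ((N : ℝ) + 2 * σ) / C) * gagliardoSq σ Ω v +
        2 * (∫⁻ x, ENNReal.ofReal |v x|) ^ 2 := by
  haveI : Nonempty (Fin N) := ⟨⟨0, hN⟩⟩
  set ωN : ℝ := (volume (Metric.ball (0 : EuclideanSpace ℝ (Fin N)) 1)).toReal with hωN
  have hω0 : 0 < ωN := by
    apply ENNReal.toReal_pos
    · exact (measure_ball_pos volume _ one_pos).ne'
    · exact measure_ball_lt_top.ne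
  set e : ℝ := (N : ℝ) + 2 * σ with he
  have he0 : 0 < e := by positivity
  have hρe : 0 < ρ ^ e := Real.rpow_pos_of_pos hρ _
  set K : ℝ≥0∞ := ENNReal.ofReal (C * ρ ^ N) with hK
  have hKtop : K ≠ ⊤ := ENNReal.ofReal_ne_top
  set L : ℝ≥0∞ := ∫⁻ x, ENNReal.ofReal |v x| with hL
  set MΩ : ℝ≥0∞ := ∫⁻ x in Ω, ENNReal.ofReal (v x ^ 2) with hMΩ
  set c₂ : ℝ≥0∞ := ENNReal.ofReal (ωN * ρ ^ e / (2 * C)) with hc₂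
  set G : ℝ≥0∞ := gagliardoSq σ Ω v with hG
  set half : ℝ≥0∞ := ENNReal.ofReal (1 / 2) with hhalf
  -- the kernel
  set F : EuclideanSpace ℝ (Fin N) → EuclideanSpace ℝ (Fin N) → ℝ≥0∞ :=
    fun x y => ENNReal.ofReal ((v x - v y) ^ 2 / ‖x - y‖ ^ e) with hF
  have hFmeas : Measurable (Function.uncurry F) := by
    apply ENNReal.measurable_ofReal.comp
    apply Measurable.div
    · exact ((hv.comp measurable_fst).sub (hv.comp measurable_snd)).pow_const 2
    · have hcont : Continuous fun p : EuclideanSpace ℝ (Fin N) × EuclideanSpace ℝ (Fin N) =>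
          ‖p.1 - p.2‖ ^ e :=
        Continuous.rpow_const ((continuous_fst.sub continuous_snd).norm)
          (fun p => Or.inr he0.le)
      exact hcont.measurable
  have hFmeas1 : ∀ x : EuclideanSpace ℝ (Fin N), Measurable fun y => F x y := fun x =>
    hFmeas.comp (measurable_const.prodMk measurable_id)
  have hImeas : Measurable fun x => ∫⁻ y in Ω, F x y := by
    exact Measurable.lintegral_prod_right hFmeas
  -- the key pointwise estimate
  have key : ∀ x ∈ Ω, K * ENNReal.ofReal (v x ^ 2) ≤
      half * (K * ENNReal.ofReal (v x ^ 2)) + c₂ * (∫⁻ y in Ω, F x y) +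
        ENNReal.ofReal |v x| * L := by
    intro x hx
    have hball : volume (Ω ∩ ball x ρ) ≤ volume (ball x ρ) :=
      measure_mono Set.inter_subset_right
    calc K * ENNReal.ofReal (v x ^ 2)
        ≤ volume (Ω ∩ ball x ρ) * ENNReal.ofReal (v x ^ 2) := by
          gcongr
          exact hdens x hx
      _ = ∫⁻ _ in Ω ∩ ball x ρ, ENNReal.ofReal (v x ^ 2) := by
          rw [setLIntegral_const, mul_comm]
      _ ≤ ∫⁻ y in Ω ∩ ball x ρ,
            (ENNReal.ofReal (C / (2 * ωN) * v x ^ 2) + c₂ * F x y +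
              ENNReal.ofReal |v x| * ENNReal.ofReal |v y|) := by
          apply setLIntegral_mono
          · refine Measurable.add (f := fun y => ENNReal.ofReal (C / (2 * ωN) * v x ^ 2) + c₂ * F x y)
              (g := fun y => ENNReal.ofReal |v x| * ENNReal.ofReal |v y|) ?_ ?_
            refine Measurable.add (f := fun _ => ENNReal.ofReal (C / (2 * ωN) * v x ^ 2))
              (g := fun y => c₂ * F x y) ?_ ?_
            · exact measurable_const
            · exact (hFmeas1 x).const_mul _
            · exact (ENNReal.measurable_ofReal.comp (hv.abs)).const_mul _
          · intro y hy
            -- the real pointwise inequality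
            have hyx : ‖x - y‖ < ρ := by
              have := hy.2
              rw [mem_ball, dist_comm, dist_eq_norm] at this
              exact this
            have hker : (v x - v y) ^ 2 ≤ ρ ^ e * ((v x - v y) ^ 2 / ‖x - y‖ ^ e) := by
              by_cases hxy : ‖x - y‖ = 0
              · have h0 : (v x - v y) ^ 2 = 0 := by
                  rw [norm_eq_zero, sub_eq_zero] at hxy
                  rw [hxy, sub_self]
                  ring
                rw [h0]
                positivity
              · have hxy0 : 0 < ‖x - y‖ := lt_of_le_of_ne (norm_nonneg _) (Ne.symm hxy)
                have hd : 0 < ‖x - y‖ ^ e := Real.rpow_pos_of_pos hxy0 _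
                have hde : ‖x - y‖ ^ e ≤ ρ ^ e :=
                  Real.rpow_le_rpow (norm_nonneg _) hyx.le he0.le
                calc (v x - v y) ^ 2 = ‖x - y‖ ^ e * ((v x - v y) ^ 2 / ‖x - y‖ ^ e) := by
                      field_simp
                  _ ≤ ρ ^ e * ((v x - v y) ^ 2 / ‖x - y‖ ^ e) := by
                      apply mul_le_mul_of_nonneg_right hde
                      positivity
            have hamgm : |v x| * |v x - v y| ≤
                C / (2 * ωN) * v x ^ 2 + ωN / (2 * C) * (v x - v y) ^ 2 := by
              have h2 : |v x| * |v x - v y| ≤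
                  (C ^ 2 * v x ^ 2 + ωN ^ 2 * (v x - v y) ^ 2) / (2 * (C * ωN)) := by
                rw [le_div_iff₀ (by positivity)]
                nlinarith [sq_nonneg (C * |v x| - ωN * |v x - v y|), sq_abs (v x),
                  sq_abs (v x - v y)]
              have h3 : (C ^ 2 * v x ^ 2 + ωN ^ 2 * (v x - v y) ^ 2) / (2 * (C * ωN)) =
                  C / (2 * ωN) * v x ^ 2 + ωN / (2 * C) * (v x - v y) ^ 2 := by
                field_simp
              linarith [h2, h3.le, h3.ge]
            have habs : v x ^ 2 ≤ |v x| * |v x - v y| + |v x| * |v y| := by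
              calc v x ^ 2 = v x * (v x - v y) + v x * v y := by ring
                _ ≤ |v x * (v x - v y)| + |v x * v y| :=
                    add_le_add (le_abs_self _) (le_abs_self _)
                _ = |v x| * |v x - v y| + |v x| * |v y| := by rw [abs_mul, abs_mul]
            have hreal : v x ^ 2 ≤ C / (2 * ωN) * v x ^ 2 +
                ωN * ρ ^ e / (2 * C) * ((v x - v y) ^ 2 / ‖x - y‖ ^ e) + |v x| * |v y| := by
              have h4 : ωN / (2 * C) * (v x - v y) ^ 2 ≤
                  ωN * ρ ^ e / (2 * C) * ((v x - v y) ^ 2 / ‖x - y‖ ^ e) := by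
                have := mul_le_mul_of_nonneg_left hker (by positivity : (0:ℝ) ≤ ωN / (2 * C))
                calc ωN / (2 * C) * (v x - v y) ^ 2
                    ≤ ωN / (2 * C) * (ρ ^ e * ((v x - v y) ^ 2 / ‖x - y‖ ^ e)) := this
                  _ = ωN * ρ ^ e / (2 * C) * ((v x - v y) ^ 2 / ‖x - y‖ ^ e) := by ring
              linarith
            calc ENNReal.ofReal (v x ^ 2)
                ≤ ENNReal.ofReal (C / (2 * ωN) * v x ^ 2 +
                    ωN * ρ ^ e / (2 * C) * ((v x - v y) ^ 2 / ‖x - y‖ ^ e) + |v x| * |v y|) :=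
                  ENNReal.ofReal_le_ofReal hreal
              _ = ENNReal.ofReal (C / (2 * ωN) * v x ^ 2) + c₂ * F x y +
                    ENNReal.ofReal |v x| * ENNReal.ofReal |v y| := by
                  rw [ENNReal.ofReal_add (by positivity) (by positivity),
                    ENNReal.ofReal_add (by positivity) (by positivity), hc₂, hF,
                    ← ENNReal.ofReal_mul (by positivity),
                    ← ENNReal.ofReal_mul (abs_nonneg _)]
      _ = (∫⁻ _ in Ω ∩ ball x ρ, ENNReal.ofReal (C / (2 * ωN) * v x ^ 2)) +
            (∫⁻ y in Ω ∩ ball x ρ, c₂ * F x y) +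
            (∫⁻ y in Ω ∩ ball x ρ, ENNReal.ofReal |v x| * ENNReal.ofReal |v y|) := by
          rw [lintegral_add_left (f := fun y => ENNReal.ofReal (C / (2 * ωN) * v x ^ 2) + c₂ * F x y) (measurable_const.add ((hFmeas1 x).const_mul _)),
            lintegral_add_left measurable_const]
      _ ≤ half * (K * ENNReal.ofReal (v x ^ 2)) + c₂ * (∫⁻ y in Ω, F x y) +
            ENNReal.ofReal |v x| * L := by
          gcongr
          · -- first term
            rw [setLIntegral_const]
            calc ENNReal.ofReal (C / (2 * ωN) * v x ^ 2) * volume (Ω ∩ ball x ρ)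
                ≤ ENNReal.ofReal (C / (2 * ωN) * v x ^ 2) * volume (ball x ρ) := by
                  gcongr
              _ = half * (K * ENNReal.ofReal (v x ^ 2)) := by
                  have hb : volume (ball x ρ) = ENNReal.ofReal (ρ ^ N) *
                      volume (ball (0 : EuclideanSpace ℝ (Fin N)) 1) := by
                    have := Measure.addHaar_ball
                      (μ := (volume : Measure (EuclideanSpace ℝ (Fin N)))) x hρ.le
                    rwa [finrank_euclideanSpace_fin] at this
                  have hb1 : volume (ball (0 : EuclideanSpace ℝ (Fin N)) 1) =
                      ENNReal.ofReal ωN :=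
                    (ENNReal.ofReal_toReal measure_ball_lt_top.ne).symm
                  rw [hb, hb1, hhalf, hK,
                    ← ENNReal.ofReal_mul (by positivity),
                    ← ENNReal.ofReal_mul (by positivity),
                    ← ENNReal.ofReal_mul (by positivity),
                    ← ENNReal.ofReal_mul (by positivity)]
                  congr 1
                  field_simp
          · -- second term
            rw [lintegral_const_mul' _ _ ENNReal.ofReal_ne_top]
            gcongr
            exact Set.inter_subset_left
          · -- third term
            rw [lintegral_const_mul' _ _ ENNReal.ofReal_ne_top]
            gcongr
            exact setLIntegral_le_lintegral _ _
  -- integrate over Ω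
  have hmain : K * MΩ ≤ half * (K * MΩ) + (c₂ * G + L * L) := by
    calc K * MΩ = ∫⁻ x in Ω, K * ENNReal.ofReal (v x ^ 2) :=
          (lintegral_const_mul' _ _ hKtop).symm
      _ ≤ ∫⁻ x in Ω, (half * (K * ENNReal.ofReal (v x ^ 2)) + c₂ * (∫⁻ y in Ω, F x y) +
            ENNReal.ofReal |v x| * L) := by
          apply setLIntegral_mono
          · apply Measurable.add
            refine Measurable.add (f := fun x => half * (K * ENNReal.ofReal (v x ^ 2)))
              (g := fun x => c₂ * ∫⁻ y in Ω, F x y) ?_ ?_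
            · exact ((ENNReal.measurable_ofReal.comp ((hv.pow_const 2))).const_mul _).const_mul _
            · exact hImeas.const_mul _
            · exact (ENNReal.measurable_ofReal.comp hv.abs).mul_const _
          · exact key
      _ = half * (K * MΩ) + (c₂ * G + (∫⁻ x in Ω, ENNReal.ofReal |v x|) * L) := by
          have hm1 : Measurable fun x : EuclideanSpace ℝ (Fin N) =>
              half * (K * ENNReal.ofReal (v x ^ 2)) :=
            (((hv.pow_const 2).ennreal_ofReal).const_mul K).const_mul half
          have hm2 : Measurable fun x : EuclideanSpace ℝ (Fin N) =>
              c₂ * ∫⁻ y in Ω, F x y := hImeas.const_mul c₂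
          rw [lintegral_add_left (f := fun x => half * (K * ENNReal.ofReal (v x ^ 2)) + c₂ * ∫⁻ y in Ω, F x y) (hm1.add hm2), lintegral_add_left hm1,
            lintegral_const_mul' _ _ (by rw [hhalf]; exact ofReal_ne_top),
            lintegral_const_mul' _ _ hKtop,
            lintegral_const_mul' _ _ ofReal_ne_top,
            lintegral_mul_const _ (hv.abs.ennreal_ofReal)]
          rw [hG, gagliardoSq, add_assoc]
      _ ≤ half * (K * MΩ) + (c₂ * G + L * L) := by
          gcongr
          exact setLIntegral_le_lintegral _ _
  -- subtract
  have hKMΩ : K * MΩ ≠ ⊤ := mul_ne_top hKtop hM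
  have hhalfKM : half * (K * MΩ) ≠ ⊤ := mul_ne_top ofReal_ne_top hKMΩ
  have hsplit : K * MΩ = half * (K * MΩ) + half * (K * MΩ) := by
    rw [← add_mul, hhalf, ← ENNReal.ofReal_add (by norm_num) (by norm_num)]
    norm_num
  have hhalf_le : half * (K * MΩ) ≤ c₂ * G + L * L := by
    have h2 : half * (K * MΩ) + half * (K * MΩ) ≤ half * (K * MΩ) + (c₂ * G + L * L) :=
      le_trans hsplit.symm.le hmain
    exact (ENNReal.add_le_add_iff_left hhalfKM).1 h2
  have hfinal : K * MΩ ≤ 2 * (c₂ * G + L * L) := by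
    calc K * MΩ = half * (K * MΩ) + half * (K * MΩ) := hsplit
      _ ≤ (c₂ * G + L * L) + (c₂ * G + L * L) := add_le_add hhalf_le hhalf_le
      _ = 2 * (c₂ * G + L * L) := by ring
  calc K * MΩ ≤ 2 * (c₂ * G + L * L) := hfinal
    _ = (2 * c₂) * G + 2 * L ^ 2 := by ring
    _ = ENNReal.ofReal (ωN * ρ ^ e / C) * G + 2 * L ^ 2 := by
        congr 1
        rw [hc₂, ← ENNReal.ofReal_ofNat, ← ENNReal.ofReal_mul (by norm_num)]
        congr 1
        field_simp


/-- Nash-type inequality with exponent `α = min{r,s}` for the coupled energy. -/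
theorem nash_coupled_energy (N : ℕ) (hN : 2 ≤ N) (r s c : ℝ)
    (hr : r ∈ Set.Ioo (0 : ℝ) 1) (hs : s ∈ Set.Ioo (0 : ℝ) 1) (hc : c ∈ Set.Ioo (0 : ℝ) 1)
    (αs αr αc : ℝ) (hαs : 0 < αs) (hαr : 0 < αr) (hαc : 0 < αc)
    (Ωs Ωr : Set (EuclideanSpace ℝ (Fin N))) (hne : Ωs.Nonempty) (hΩs : IsOpen Ωs)
    (hbdd : Bornology.IsBounded Ωs) (hΩr : Ωr = (closure Ωs)ᶜ)
    (CΩs : ℝ) (hCΩs : 0 < CΩs)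
    (hdensity_s : ∀ x ∈ Ωs, ∀ ρ : ℝ, 0 < ρ → ρ ≤ 1 →
      ENNReal.ofReal (CΩs * ρ ^ N) ≤ volume (Ωs ∩ Metric.ball x ρ))
    (CΩr : ℝ) (hCΩr : 0 < CΩr)
    (hdensity_r : ∀ x ∈ Ωr, ∀ ρ : ℝ, 0 < ρ →
      ENNReal.ofReal (CΩr * ρ ^ N) ≤ volume (Ωr ∩ Metric.ball x ρ)) :
    ∃ C : ℝ, 0 < C ∧ ∀ v : EuclideanSpace ℝ (Fin N) → ℝ,
      MemLp v 1 volume → MemLp v 2 volume →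
      energyQ r s c αs αr αc Ωs Ωr v ≠ ⊤ →
      eLpNorm v 2 volume ^ (2 + 4 * min r s / (N : ℝ)) ≤
        ENNReal.ofReal C * eLpNorm v 1 volume ^ (4 * min r s / (N : ℝ)) *
          (eLpNorm v 2 volume ^ (2 : ℝ) + energyQ r s c αs αr αc Ωs Ωr v) := by
  obtain ⟨hr0, hr1⟩ := hr
  obtain ⟨hs0, hs1⟩ := hs
  have hN0 : 0 < N := by omega
  have hNR : (0 : ℝ) < N := by exact_mod_cast hN0
  haveI : Nonempty (Fin N) := ⟨⟨0, hN0⟩⟩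
  set α := min r s with hαdef
  have hα0 : 0 < α := lt_min hr0 hs0
  have hαs' : α ≤ s := min_le_right r s
  have hαr' : α ≤ r := min_le_left r s
  set ωN : ℝ := (volume (Metric.ball (0 : EuclideanSpace ℝ (Fin N)) 1)).toReal with hωN
  have hω0 : 0 < ωN := by
    apply ENNReal.toReal_pos
    · exact (measure_ball_pos volume _ one_pos).ne'
    · exact measure_ball_lt_top.ne
  set A : ℝ := 4 * ωN / (αs * CΩs ^ 2) + 4 * ωN / (αr * CΩr ^ 2) with hA
  set B : ℝ := 2 / CΩs + 2 / CΩr with hB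
  have hA0 : 0 < A := by positivity
  have hB0 : 0 < B := by positivity
  refine ⟨(2 * B) ^ (2 * α / (N : ℝ)) * max 1 (2 * A), by positivity, ?_⟩
  intro v hv1 hv2 hQtop
  -- replace `v` by a measurable representative
  have hvm : AEMeasurable v volume := hv2.aestronglyMeasurable.aemeasurable
  set w := hvm.mk v with hw
  have hwmeas : Measurable w := hvm.measurable_mk
  have hvw : v =ᵐ[volume] w := hvm.ae_eq_mk
  have hQeq : energyQ r s c αs αr αc Ωs Ωr v = energyQ r s c αs αr αc Ωs Ωr w := by
    unfold energyQ
    rw [gagliardoSq_congr_ae s Ωs hvw, gagliardoSq_congr_ae r Ωr hvw,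
      crossTerm_congr_ae c Ωs Ωr hvw]
  rw [hQeq] at hQtop ⊢
  rw [eLpNorm_congr_ae hvw]
  rw [show eLpNorm v 1 volume = eLpNorm w 1 volume from eLpNorm_congr_ae hvw]
  have hw1 : MemLp w 1 volume := hv1.ae_eq hvw
  have hw2 : MemLp w 2 volume := hv2.ae_eq hvw
  -- basic quantities
  set Q := energyQ r s c αs αr αc Ωs Ωr w with hQdef
  set L := ∫⁻ x, ENNReal.ofReal |w x| with hLdef
  set M := ∫⁻ x, ENNReal.ofReal (w x ^ 2) with hMdef
  have hLnorm : eLpNorm w 1 volume = L := by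
    rw [eLpNorm_one_eq_lintegral_enorm]
    exact lintegral_congr fun x => Real.enorm_eq_ofReal_abs (w x)
  have hM2 : eLpNorm w 2 volume = M ^ ((1 : ℝ) / 2) := by
    rw [eLpNorm_eq_lintegral_rpow_enorm_toReal (by norm_num) (by norm_num)]
    have h2 : ((2 : ℝ≥0∞)).toReal = (2 : ℝ) := by norm_num
    rw [h2]
    congr 1
    apply lintegral_congr fun x => ?_
    rw [Real.enorm_eq_ofReal_abs, ENNReal.ofReal_rpow_of_nonneg (abs_nonneg _) (by norm_num)]
    congr 1
    rw [show ((2 : ℝ)) = ((2 : ℕ) : ℝ) by norm_num, Real.rpow_natCast, sq_abs]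
  have hLtop : L ≠ ⊤ := by rw [← hLnorm]; exact hw1.eLpNorm_ne_top
  have hMtop : M ≠ ⊤ := by
    have h2 := hw2.eLpNorm_ne_top
    rw [hM2] at h2
    intro hMt
    rw [hMt] at h2
    simp [ENNReal.top_rpow_of_pos] at h2
  -- degenerate case `M = 0`
  by_cases hM0 : M = 0
  · rw [hM2, hM0, ENNReal.zero_rpow_of_pos (by norm_num),
      ENNReal.zero_rpow_of_pos (by positivity)]
    exact zero_le
  have hL0 : L ≠ 0 := by
    intro h0
    apply hM0
    have hae : ∀ᵐ x, ENNReal.ofReal |w x| = 0 :=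
      (lintegral_eq_zero_iff (hwmeas.abs.ennreal_ofReal)).1 h0
    rw [hMdef, lintegral_eq_zero_iff ((hwmeas.pow_const 2).ennreal_ofReal)]
    filter_upwards [hae] with x hx
    have hx0 : w x = 0 := by
      rw [ENNReal.ofReal_eq_zero] at hx
      exact abs_eq_zero.1 (le_antisymm hx (abs_nonneg (w x)))
    simp [hx0]
  -- real quantities
  set m := M.toReal with hmdef
  set l := L.toReal with hldef
  set q := Q.toReal with hqdef
  have hm0 : 0 < m := ENNReal.toReal_pos hM0 hMtop
  have hl0 : 0 < l := ENNReal.toReal_pos hL0 hLtop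
  have hq0 : 0 ≤ q := ENNReal.toReal_nonneg
  set Gs := gagliardoSq s Ωs w with hGsdef
  set Gr := gagliardoSq r Ωr w with hGrdef
  have hGs_top : Gs ≠ ⊤ := by
    intro h
    apply hQtop
    have h1 : ENNReal.ofReal (αs / 4) * Gs = ⊤ := by
      rw [h]; exact ENNReal.mul_top ((ENNReal.ofReal_pos.2 (by positivity)).ne')
    show energyQ r s c αs αr αc Ωs Ωr w = ⊤
    unfold energyQ
    rw [← hGsdef, h1]
    simp
  have hGr_top : Gr ≠ ⊤ := by
    intro h
    apply hQtop
    have h1 : ENNReal.ofReal (αr / 4) * Gr = ⊤ := by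
      rw [h]; exact ENNReal.mul_top ((ENNReal.ofReal_pos.2 (by positivity)).ne')
    show energyQ r s c αs αr αc Ωs Ωr w = ⊤
    unfold energyQ
    rw [← hGrdef, h1]
    simp
  set gs := Gs.toReal with hgsdef
  set gr := Gr.toReal with hgrdef
  have hgs0 : 0 ≤ gs := ENNReal.toReal_nonneg
  have hgr0 : 0 ≤ gr := ENNReal.toReal_nonneg
  have hgs_le : αs / 4 * gs ≤ q := by
    have h1 : ENNReal.ofReal (αs / 4) * Gs ≤ Q := by
      rw [hQdef]
      unfold energyQ
      rw [← hGsdef]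
      exact le_trans le_self_add le_self_add
    have h2 := ENNReal.toReal_mono hQtop h1
    rwa [ENNReal.toReal_mul, ENNReal.toReal_ofReal (by positivity)] at h2
  have hgr_le : αr / 4 * gr ≤ q := by
    have h1 : ENNReal.ofReal (αr / 4) * Gr ≤ Q := by
      rw [hQdef]
      unfold energyQ
      rw [← hGrdef]
      exact le_trans le_add_self le_self_add
    have h2 := ENNReal.toReal_mono hQtop h1
    rwa [ENNReal.toReal_mul, ENNReal.toReal_ofReal (by positivity)] at h2
  -- boundary is null, measurability of domains
  have hnull : volume (closure Ωs \ Ωs) = 0 := boundary_null hN0 Ωs hΩs CΩs hCΩs hdensity_s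
  have hΩs_meas : MeasurableSet Ωs := hΩs.measurableSet
  have hΩr_meas : MeasurableSet Ωr := by
    rw [hΩr]
    exact (isClosed_closure).measurableSet.compl
  set Ms := ∫⁻ x in Ωs, ENNReal.ofReal (w x ^ 2) with hMsdef
  set Mr := ∫⁻ x in Ωr, ENNReal.ofReal (w x ^ 2) with hMrdef
  have hMs_top : Ms ≠ ⊤ :=
    (lt_of_le_of_lt (setLIntegral_le_lintegral _ _) (lt_top_iff_ne_top.2 hMtop)).ne
  have hMr_top : Mr ≠ ⊤ :=
    (lt_of_le_of_lt (setLIntegral_le_lintegral _ _) (lt_top_iff_ne_top.2 hMtop)).ne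
  have hsplitM : M ≤ Ms + Mr := by
    have huniv : (Set.univ : Set (EuclideanSpace ℝ (Fin N))) =
        Ωs ∪ (Ωr ∪ (closure Ωs \ Ωs)) := by
      rw [hΩr]
      ext x
      simp only [Set.mem_univ, Set.mem_union, Set.mem_compl_iff, Set.mem_diff, true_iff]
      by_cases h1 : x ∈ Ωs
      · tauto
      · by_cases h2 : x ∈ closure Ωs <;> tauto
    have hzero : (∫⁻ x in closure Ωs \ Ωs, ENNReal.ofReal (w x ^ 2)) = 0 := by
      rw [Measure.restrict_eq_zero.2 hnull, lintegral_zero_measure]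
    calc M = ∫⁻ x in Set.univ, ENNReal.ofReal (w x ^ 2) := (setLIntegral_univ _).symm
      _ = ∫⁻ x in Ωs ∪ (Ωr ∪ (closure Ωs \ Ωs)), ENNReal.ofReal (w x ^ 2) := by
          rw [← huniv]
      _ ≤ Ms + ∫⁻ x in Ωr ∪ (closure Ωs \ Ωs), ENNReal.ofReal (w x ^ 2) :=
          lintegral_union_le _ _ _
      _ ≤ Ms + (Mr + ∫⁻ x in closure Ωs \ Ωs, ENNReal.ofReal (w x ^ 2)) :=
          add_le_add_right (lintegral_union_le _ _ _) _
      _ = Ms + Mr := by rw [hzero, add_zero]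
  set ms := Ms.toReal with hmsdef
  set mr := Mr.toReal with hmrdef
  have hm_split : m ≤ ms + mr := by
    have h1 := ENNReal.toReal_mono (ENNReal.add_ne_top.2 ⟨hMs_top, hMr_top⟩) hsplitM
    rwa [ENNReal.toReal_add hMs_top hMr_top] at h1
  -- the per-scale estimate
  have hest : ∀ ρ : ℝ, 0 < ρ → ρ ≤ 1 → m ≤ A * ρ ^ (2 * α) * q + B * (l ^ 2 / ρ ^ N) := by
    intro ρ hρ0 hρ1
    have hρN0 : (0 : ℝ) < ρ ^ N := pow_pos hρ0 N
    have hds := domain_est hN0 Ωs hΩs_meas CΩs s ρ hCΩs hs0 hρ0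
      (fun x hx => hdensity_s x hx ρ hρ0 hρ1) w hwmeas hMs_top
    have hdr := domain_est hN0 Ωr hΩr_meas CΩr r ρ hCΩr hr0 hρ0
      (fun x hx => hdensity_r x hx ρ hρ0) w hwmeas hMr_top
    have hfinS : ENNReal.ofReal (ωN * ρ ^ ((N : ℝ) + 2 * s) / CΩs) * Gs + 2 * L ^ 2 ≠ ⊤ :=
      ENNReal.add_ne_top.2 ⟨ENNReal.mul_ne_top ENNReal.ofReal_ne_top hGs_top,
        ENNReal.mul_ne_top (by simp) (ENNReal.pow_ne_top hLtop)⟩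
    have hfinR : ENNReal.ofReal (ωN * ρ ^ ((N : ℝ) + 2 * r) / CΩr) * Gr + 2 * L ^ 2 ≠ ⊤ :=
      ENNReal.add_ne_top.2 ⟨ENNReal.mul_ne_top ENNReal.ofReal_ne_top hGr_top,
        ENNReal.mul_ne_top (by simp) (ENNReal.pow_ne_top hLtop)⟩
    have h1 := ENNReal.toReal_mono hfinS hds
    have h2 := ENNReal.toReal_mono hfinR hdr
    rw [ENNReal.toReal_mul, ENNReal.toReal_ofReal (by positivity),
      ENNReal.toReal_add (ENNReal.mul_ne_top ENNReal.ofReal_ne_top hGs_top)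
        (ENNReal.mul_ne_top (by simp) (ENNReal.pow_ne_top hLtop)),
      ENNReal.toReal_mul, ENNReal.toReal_ofReal (by positivity),
      ENNReal.toReal_mul, ENNReal.toReal_pow] at h1
    rw [ENNReal.toReal_mul, ENNReal.toReal_ofReal (by positivity),
      ENNReal.toReal_add (ENNReal.mul_ne_top ENNReal.ofReal_ne_top hGr_top)
        (ENNReal.mul_ne_top (by simp) (ENNReal.pow_ne_top hLtop)),
      ENNReal.toReal_mul, ENNReal.toReal_ofReal (by positivity),
      ENNReal.toReal_mul, ENNReal.toReal_pow] at h2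
    simp only [ENNReal.toReal_ofNat] at h1 h2
    -- exponent splitting
    have hρadd : ∀ t : ℝ, ρ ^ ((N : ℝ) + 2 * t) = ρ ^ N * ρ ^ (2 * t) := by
      intro t
      rw [Real.rpow_add hρ0, Real.rpow_natCast]
    rw [hρadd] at h1 h2
    -- per-domain real bounds
    have hsexp : ρ ^ (2 * s) ≤ ρ ^ (2 * α) :=
      Real.rpow_le_rpow_of_exponent_ge hρ0 hρ1 (by linarith)
    have hrexp : ρ ^ (2 * r) ≤ ρ ^ (2 * α) :=
      Real.rpow_le_rpow_of_exponent_ge hρ0 hρ1 (by linarith)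
    have hρα0 : (0 : ℝ) < ρ ^ (2 * α) := Real.rpow_pos_of_pos hρ0 _
    have hgs_q : gs ≤ 4 / αs * q := by
      rw [div_mul_eq_mul_div, le_div_iff₀ hαs]
      linarith
    have hgr_q : gr ≤ 4 / αr * q := by
      rw [div_mul_eq_mul_div, le_div_iff₀ hαr]
      linarith
    have hms : ms ≤ 4 * ωN / (αs * CΩs ^ 2) * (ρ ^ (2 * α) * q) + 2 / CΩs * (l ^ 2 / ρ ^ N) := by
      calc ms = (CΩs * ρ ^ N * ms) / (CΩs * ρ ^ N) := by field_simp
        _ ≤ (ωN * (ρ ^ N * ρ ^ (2 * s)) / CΩs * gs + 2 * l ^ 2) / (CΩs * ρ ^ N) := by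
            gcongr
        _ = (ωN * ρ ^ (2 * s) / CΩs ^ 2) * gs + (2 / CΩs) * (l ^ 2 / ρ ^ N) := by
            field_simp
        _ ≤ (ωN * ρ ^ (2 * α) / CΩs ^ 2) * gs + (2 / CΩs) * (l ^ 2 / ρ ^ N) := by
            gcongr
        _ ≤ (ωN * ρ ^ (2 * α) / CΩs ^ 2) * (4 / αs * q) + (2 / CΩs) * (l ^ 2 / ρ ^ N) := by
            gcongr
        _ = 4 * ωN / (αs * CΩs ^ 2) * (ρ ^ (2 * α) * q) + 2 / CΩs * (l ^ 2 / ρ ^ N) := by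
            field_simp
    have hmr : mr ≤ 4 * ωN / (αr * CΩr ^ 2) * (ρ ^ (2 * α) * q) + 2 / CΩr * (l ^ 2 / ρ ^ N) := by
      calc mr = (CΩr * ρ ^ N * mr) / (CΩr * ρ ^ N) := by field_simp
        _ ≤ (ωN * (ρ ^ N * ρ ^ (2 * r)) / CΩr * gr + 2 * l ^ 2) / (CΩr * ρ ^ N) := by
            gcongr
        _ = (ωN * ρ ^ (2 * r) / CΩr ^ 2) * gr + (2 / CΩr) * (l ^ 2 / ρ ^ N) := by
            field_simp
        _ ≤ (ωN * ρ ^ (2 * α) / CΩr ^ 2) * gr + (2 / CΩr) * (l ^ 2 / ρ ^ N) := by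
            gcongr
        _ ≤ (ωN * ρ ^ (2 * α) / CΩr ^ 2) * (4 / αr * q) + (2 / CΩr) * (l ^ 2 / ρ ^ N) := by
            gcongr
        _ = 4 * ωN / (αr * CΩr ^ 2) * (ρ ^ (2 * α) * q) + 2 / CΩr * (l ^ 2 / ρ ^ N) := by
            field_simp
    have hAB : A * ρ ^ (2 * α) * q + B * (l ^ 2 / ρ ^ N) =
        (4 * ωN / (αs * CΩs ^ 2) * (ρ ^ (2 * α) * q) + 2 / CΩs * (l ^ 2 / ρ ^ N)) +
        (4 * ωN / (αr * CΩr ^ 2) * (ρ ^ (2 * α) * q) + 2 / CΩr * (l ^ 2 / ρ ^ N)) := by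
      rw [hA, hB]
      ring
    linarith
  -- optimize
  have hopt := nash_opt_real N hN0 α A B m l q hα0 hA0 hB0 hm0 hl0 hq0 hest
  -- convert the goal back to `ℝ≥0∞`
  rw [hLnorm, hM2]
  have hMr1 : (M ^ ((1 : ℝ) / 2)) ^ ((2 : ℝ) + 4 * α / (N : ℝ)) = M ^ (1 + 2 * α / (N : ℝ)) := by
    rw [← ENNReal.rpow_mul]
    congr 1
    ring
  have hMr2 : (M ^ ((1 : ℝ) / 2)) ^ ((2 : ℝ)) = M := by
    rw [← ENNReal.rpow_mul]
    norm_num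
  rw [hMr1, hMr2]
  have hMof : M = ENNReal.ofReal m := (ENNReal.ofReal_toReal hMtop).symm
  have hLof : L = ENNReal.ofReal l := (ENNReal.ofReal_toReal hLtop).symm
  have hQof : Q = ENNReal.ofReal q := (ENNReal.ofReal_toReal hQtop).symm
  rw [hMof, hLof, hQof, ENNReal.ofReal_rpow_of_pos hm0, ENNReal.ofReal_rpow_of_pos hl0,
    ← ENNReal.ofReal_add hm0.le hq0, ← ENNReal.ofReal_mul (by positivity),
    ← ENNReal.ofReal_mul (by positivity)]
  exact ENNReal.ofReal_le_ofReal hopt
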